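/- Let G be a topological group and let g ∈ G be an element not lying in the topological closure of {1}. Then there exists a continuous left-invariant pseudometric d on G with d(1, g) ≥ 1. In particular, G acts continuously and isometrically on a metric space in which g has a nontrivial orbit. -/

import Mathlib

open Pointwise

/-- A continuous, left-invariant pseudometric on a topological group `G`. -/
structure IsContLeftInvPseudometric (G : Type*) [Group G] [TopologicalSpace G]
    (d : G → G → ℝ) : Prop where
  continuous : Continuous fun p : G × G => d p.1 p.2
  self : ∀ x : G, d x x = 0
  symm : ∀ x y : G, d x y = d y x
  nonneg : ∀ x y : G, 0 ≤ d x y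
  triangle : ∀ x y z : G, d x z ≤ d x y + d y z
  left_inv : ∀ g x y : G, d (g * x) (g * y) = d x y

/-- A subset `A` of a topological group `G` is coarsely bounded in `G` if it has
finite diameter with respect to every continuous left-invariant pseudometric on `G`. -/
def IsCoarselyBounded (G : Type*) [Group G] [TopologicalSpace G] (A : Set G) : Prop :=
  ∀ d : G → G → ℝ, IsContLeftInvPseudometric G d →
    ∃ M : ℝ, ∀ a ∈ A, ∀ b ∈ A, d a b ≤ M

/-- The word length of `g` with respect to a generating set `S`: the least `n` such
that `g` is a product of `n` elements of `S`. -/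
noncomputable def wordLength {G : Type*} [Group G] (S : Set G) (g : G) : ℕ :=
  sInf {n : ℕ | ∃ l : List G, l.length = n ∧ (∀ s ∈ l, s ∈ S) ∧ l.prod = g}

/-- `G` admits a geometry if there is a continuous left-invariant pseudometric on `G`
which dominates, in the coarse Lipschitz sense, every continuous left-invariant
pseudometric on `G`. -/
def AdmitsAGeometry (G : Type*) [Group G] [TopologicalSpace G] : Prop :=
  ∃ d : G → G → ℝ, IsContLeftInvPseudometric G d ∧
    ∀ d' : G → G → ℝ, IsContLeftInvPseudometric G d' →
      ∃ L K : ℝ, 0 < L ∧ 0 ≤ K ∧ ∀ g h : G, d' g h ≤ L * d g h + K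

universe u

section PontryaginAux

open Filter Topology Set NNReal

variable {G : Type*} [Group G] [TopologicalSpace G] [IsTopologicalGroup G]

lemma step_lemma (U : Set G) (hU : U ∈ 𝓝 (1:G)) :
    ∃ W : Set G, W ∈ 𝓝 (1:G) ∧ W⁻¹ = W ∧ W * W * W ⊆ U := by
  obtain ⟨V₁, hV₁o, hV₁1, hV₁⟩ := exists_open_nhds_one_mul_subset hU
  obtain ⟨V₂, hV₂o, hV₂1, hV₂⟩ := exists_open_nhds_one_mul_subset (hV₁o.mem_nhds hV₁1)
  have hV₂V₁ : V₂ ⊆ V₁ := fun x hx => by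
    have := hV₂ (Set.mul_mem_mul hx hV₂1); rwa [mul_one] at this
  refine ⟨V₂ ∩ V₂⁻¹, Filter.inter_mem (hV₂o.mem_nhds hV₂1)
      (((hV₂o.preimage continuous_inv).mem_nhds (by simpa using hV₂1))), by
        ext x; simp [and_comm], ?_⟩
  have h1 : V₂ ∩ V₂⁻¹ ⊆ V₂ := Set.inter_subset_left
  calc (V₂ ∩ V₂⁻¹) * (V₂ ∩ V₂⁻¹) * (V₂ ∩ V₂⁻¹)
      ⊆ V₂ * V₂ * V₂ := by gcongr
    _ ⊆ V₁ * V₂ := by gcongr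
    _ ⊆ V₁ * V₁ := by gcongr
    _ ⊆ U := hV₁

lemma exists_nhds_seq (g : G) (hg : g ∉ closure ({1} : Set G)) :
    ∃ V : ℕ → Set G, (∀ n, V n ∈ 𝓝 (1:G)) ∧ (∀ n, (V n)⁻¹ = V n) ∧
      (∀ n, V (n+1) * V (n+1) * V (n+1) ⊆ V n) ∧ g ∉ V 0 := by
  rw [mem_closure_iff] at hg
  push_neg at hg
  obtain ⟨o, ho, hgo, hno⟩ := hg
  have h1o : (1:G) ∉ o := by
    intro h
    have : (1:G) ∈ o ∩ {1} := ⟨h, rfl⟩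
    rw [hno] at this
    exact this
  set U₀ : Set G := (fun x : G => x⁻¹ * g) ⁻¹' o with hU₀def
  have hU₀ : U₀ ∈ 𝓝 (1:G) := by
    have hc : Continuous fun x : G => x⁻¹ * g := by continuity
    exact hc.continuousAt.preimage_mem_nhds (ho.mem_nhds (by simpa using hgo))
  have hgU₀ : g ∉ U₀ := by simp [hU₀def, h1o]
  have key : ∀ U : Set G, ∃ W : Set G,
      U ∈ 𝓝 (1:G) → W ∈ 𝓝 (1:G) ∧ W⁻¹ = W ∧ W * W * W ⊆ U := by
    intro U
    by_cases h : U ∈ 𝓝 (1:G)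
    · obtain ⟨W, h1, h2, h3⟩ := step_lemma U h
      exact ⟨W, fun _ => ⟨h1, h2, h3⟩⟩
    · exact ⟨Set.univ, fun h' => absurd h' h⟩
  choose F hF using key
  set V : ℕ → Set G := fun n => F^[n+1] U₀ with hVdef
  have hVsucc : ∀ n, V (n+1) = F (V n) := by
    intro n; simp [hVdef, Function.iterate_succ_apply']
  have hV0 : V 0 = F U₀ := by simp [hVdef]
  have hmem : ∀ n, V n ∈ 𝓝 (1:G) := by
    intro n; induction n with
    | zero => rw [hV0]; exact (hF U₀ hU₀).1
    | succ n ih => rw [hVsucc]; exact (hF _ ih).1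
  refine ⟨V, hmem, fun n => ?_, fun n => ?_, ?_⟩
  · cases n with
    | zero => rw [hV0]; exact (hF U₀ hU₀).2.1
    | succ n => rw [hVsucc]; exact (hF _ (hmem n)).2.1
  · rw [hVsucc]; exact (hF _ (hmem n)).2.2
  · intro hgV
    have hsub : V 0 ⊆ U₀ := by
      rw [hV0]
      intro x hx
      have h1 : (1:G) ∈ F U₀ := mem_of_mem_nhds (hF U₀ hU₀).1
      have : x * 1 * 1 ∈ U₀ := (hF U₀ hU₀).2.2
        (Set.mul_mem_mul (Set.mul_mem_mul hx h1) h1)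
      simpa using this
    exact hgU₀ (hsub hgV)

set_option maxHeartbeats 1000000 in
lemma exists_sep_pseudometric (g : G) (hg : g ∉ closure ({1} : Set G)) :
    ∃ d : G → G → ℝ, IsContLeftInvPseudometric G d ∧ 1 ≤ d 1 g := by
  obtain ⟨V, hVn, hVs, hV3, hgV⟩ := exists_nhds_seq g hg
  have hV1 : ∀ n, (1:G) ∈ V n := fun n => mem_of_mem_nhds (hVn n)
  have hVstep : ∀ n, V (n+1) ⊆ V n := by
    intro n x hx
    have : x * 1 * 1 ∈ V n := hV3 n (Set.mul_mem_mul (Set.mul_mem_mul hx (hV1 _)) (hV1 _))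
    simpa using this
  have hVmono : ∀ {m n : ℕ}, m ≤ n → V n ⊆ V m := by
    intro m n h
    induction h with
    | refl => exact fun _ h => h
    | step h ih => exact fun x hx => (by exact ih (hVstep _ hx))
  set q : ℝ≥0 := 2⁻¹ with hq
  have hq1 : q < 1 := by rw [hq, ← NNReal.coe_lt_coe]; norm_num
  have hq0 : 0 < q := by rw [hq, ← NNReal.coe_lt_coe]; norm_num
  -- the premetric value of an element
  set S : G → Set ℝ≥0 := fun u => insert 1 {r | ∃ n, u ∈ V n ∧ r = q ^ n} with hS
  set e : G → ℝ≥0 := fun u => sInf (S u) with he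
  have hSne : ∀ u, (S u).Nonempty := fun u => ⟨1, Set.mem_insert _ _⟩
  have he_le_one : ∀ u, e u ≤ 1 := fun u => csInf_le (OrderBot.bddBelow _) (Set.mem_insert _ _)
  have he_le : ∀ u n, u ∈ V n → e u ≤ q ^ n := fun u n hu =>
    csInf_le (OrderBot.bddBelow _) (Set.mem_insert_iff.mpr (Or.inr ⟨n, hu, rfl⟩))
  have he_lt : ∀ u k, e u < q ^ k → u ∈ V (k + 1) := by
    intro u k h
    obtain ⟨r, hr, hrk⟩ := exists_lt_of_csInf_lt (hSne u) h
    rcases Set.mem_insert_iff.mp hr with rfl | ⟨n, hn, rfl⟩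
    · exact absurd hrk (not_lt.mpr (pow_le_one₀ (zero_le : 0 ≤ q) hq1.le))
    · have hkn : k < n := by
        by_contra hc
        exact absurd (pow_le_pow_of_le_one (zero_le : 0 ≤ q) hq1.le (not_lt.mp hc))
          (not_le.mpr hrk)
      exact hVmono hkn hn
  have hzero : ∀ a : ℝ≥0, (∀ n, a ≤ q ^ n) → a = 0 := by
    intro a ha
    by_contra h
    obtain ⟨n, hn⟩ := NNReal.exists_pow_lt_of_lt_one (pos_iff_ne_zero.mpr h) hq1
    exact absurd (ha n) (not_le.mpr hn)
  have he_one : e 1 = 0 := hzero _ (fun n => he_le 1 n (hV1 n))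
  have hmemV : ∀ (u : G) (n : ℕ), u⁻¹ ∈ V n ↔ u ∈ V n := by
    intro u n
    constructor <;> intro h
    · rw [← hVs n]; simpa using h
    · rw [← hVs n] at h; simpa using h

  have he_symm : ∀ u, e u⁻¹ = e u := by
    intro u
    have hSeq : S u⁻¹ = S u := by
      rw [hS]
      dsimp only
      congr 1
      ext r
      simp only [Set.mem_setOf_eq, hmemV]
    rw [he]; dsimp only; rw [hSeq]
  have he_g : e g = 1 := by
    have hSg : S g = {1} := by
      rw [hS]
      refine Set.eq_singleton_iff_unique_mem.mpr ⟨Set.mem_insert _ _, ?_⟩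
      rintro r hr
      rcases Set.mem_insert_iff.mp hr with rfl | ⟨n, hn, rfl⟩
      · rfl
      · exact absurd (hVmono (Nat.zero_le n) hn) hgV
    rw [he]; dsimp only; rw [hSg, csInf_singleton]
  -- the premetric
  set d₀ : G → G → ℝ≥0 := fun x y => e (x⁻¹ * y) with hd₀
  have hself : ∀ x, d₀ x x = 0 := fun x => by simp [hd₀, he_one]
  have hsymm : ∀ x y, d₀ x y = d₀ y x := fun x y => by
    rw [hd₀]; dsimp only; rw [← he_symm (x⁻¹ * y), mul_inv_rev, inv_inv]
  have hinv : ∀ a x y : G, d₀ (a * x) (a * y) = d₀ x y := fun a x y => by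
    simp [hd₀, mul_assoc, mul_inv_rev]
  -- the chain condition
  have hd : ∀ x₁ x₂ x₃ x₄ : G,
      d₀ x₁ x₄ ≤ 2 * max (d₀ x₁ x₂) (max (d₀ x₂ x₃) (d₀ x₃ x₄)) := by
    intro x₁ x₂ x₃ x₄
    set M := max (d₀ x₁ x₂) (max (d₀ x₂ x₃) (d₀ x₃ x₄)) with hM
    have h12 : d₀ x₁ x₂ ≤ M := le_max_left _ _
    have h23 : d₀ x₂ x₃ ≤ M := le_trans (le_max_left _ _) (le_max_right _ _)
    have h34 : d₀ x₃ x₄ ≤ M := le_trans (le_max_right _ _) (le_max_right _ _)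
    have hprod : ∀ k : ℕ, x₁⁻¹ * x₂ ∈ V (k+1) → x₂⁻¹ * x₃ ∈ V (k+1) → x₃⁻¹ * x₄ ∈ V (k+1) →
        d₀ x₁ x₄ ≤ q ^ k := by
      intro k h1 h2 h3
      have hm : (x₁⁻¹ * x₂) * (x₂⁻¹ * x₃) * (x₃⁻¹ * x₄) ∈ V k :=
        hV3 k (Set.mul_mem_mul (Set.mul_mem_mul h1 h2) h3)
      have : x₁⁻¹ * x₄ ∈ V k := by
        have heq : (x₁⁻¹ * x₂) * (x₂⁻¹ * x₃) * (x₃⁻¹ * x₄) = x₁⁻¹ * x₄ := by group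
        rwa [heq] at hm
      exact he_le _ _ this
    rcases eq_or_lt_of_le (zero_le : 0 ≤ M) with hM0 | hM0
    · have hstep : ∀ k : ℕ, d₀ x₁ x₄ ≤ q ^ k := by
        intro k
        refine hprod k (he_lt _ _ ?_) (he_lt _ _ ?_) (he_lt _ _ ?_) <;>
          [exact lt_of_le_of_lt h12 (by rw [← hM0]; exact pow_pos hq0 _);
           exact lt_of_le_of_lt h23 (by rw [← hM0]; exact pow_pos hq0 _);
           exact lt_of_le_of_lt h34 (by rw [← hM0]; exact pow_pos hq0 _)]
      rw [hzero _ hstep]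
      exact zero_le
    · by_cases hM1 : 1 ≤ 2 * M
      · exact le_trans (le_trans (he_le_one _) hM1) (le_refl _)
      · push_neg at hM1
        have hMq : M < q := by
          rw [← NNReal.coe_lt_coe] at hM1 ⊢
          push_cast at hM1
          rw [hq]
          push_cast
          linarith
        have hex : ∃ n : ℕ, q ^ n ≤ M := by
          obtain ⟨n, hn⟩ := NNReal.exists_pow_lt_of_lt_one hM0 hq1
          exact ⟨n, hn.le⟩
        have hkne : Nat.find hex ≠ 0 := by
          intro h
          have hks := Nat.find_spec hex
          rw [h, pow_zero] at hks
          exact absurd (lt_of_le_of_lt hks hMq)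
            (by rw [hq, ← NNReal.coe_lt_coe]; norm_num)
        obtain ⟨m, hm⟩ := Nat.exists_eq_succ_of_ne_zero hkne
        have hks : q ^ (m + 1) ≤ M := by
          have := Nat.find_spec hex
          rwa [hm] at this
        have hmin : M < q ^ m := not_le.mp (Nat.find_min hex (by omega))
        have hcon : d₀ x₁ x₄ ≤ q ^ m :=
          hprod m (he_lt _ _ (lt_of_le_of_lt h12 hmin)) (he_lt _ _ (lt_of_le_of_lt h23 hmin))
            (he_lt _ _ (lt_of_le_of_lt h34 hmin))
        have hqm : (q : ℝ≥0) ^ m = 2 * q ^ (m+1) := by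
          rw [← NNReal.coe_inj, hq]
          push_cast
          ring
        calc d₀ x₁ x₄ ≤ q ^ m := hcon
          _ = 2 * q ^ (m+1) := hqm
          _ ≤ 2 * M := by gcongr
  -- the induced pseudometric
  set I := PseudoMetricSpace.ofPreNNDist d₀ hself hsymm with hI
  set dd : G → G → ℝ := fun x y => @dist G (@PseudoMetricSpace.toDist G I) x y with hdd
  have hDD : ∀ x y : G, dd x y =
      ↑(⨅ l : List G, ((x::l).zipWith d₀ (l ++ [y])).sum : ℝ≥0) := fun x y =>
    PseudoMetricSpace.dist_ofPreNNDist d₀ hself hsymm x y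
  have hub : ∀ x y : G, dd x y ≤ (d₀ x y : ℝ) := fun x y =>
    PseudoMetricSpace.dist_ofPreNNDist_le d₀ hself hsymm x y
  have hlb : (d₀ 1 g : ℝ) ≤ 2 * dd 1 g :=
    PseudoMetricSpace.le_two_mul_dist_ofPreNNDist d₀ hself hsymm hd 1 g
  -- left invariance
  have hsum : ∀ (a x y : G) (l : List G),
      (((a*x)::(l.map (a * ·))).zipWith d₀ ((l.map (a * ·)) ++ [a*y])).sum
        = ((x::l).zipWith d₀ (l ++ [y])).sum := by
    intro a x y l
    have h1 : (a*x)::(l.map (a * ·)) = (x::l).map (a * ·) := rfl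
    have h2 : (l.map (a * ·)) ++ [a*y] = (l ++ [y]).map (a * ·) := by simp
    rw [h1, h2, List.zipWith_map]
    simp only [hinv]
  have hinv_le : ∀ a x y : G, dd (a*x) (a*y) ≤ dd x y := by
    intro a x y
    rw [hDD, hDD, NNReal.coe_le_coe]
    refine le_ciInf fun l => ?_
    exact ciInf_le_of_le (OrderBot.bddBelow _) (l.map (a * ·)) (le_of_eq (hsum a x y l))
  have hinvd : ∀ a x y : G, dd (a*x) (a*y) = dd x y := by
    intro a x y
    refine le_antisymm (hinv_le a x y) ?_
    have := hinv_le a⁻¹ (a*x) (a*y)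
    simpa [← mul_assoc] using this
  -- continuity
  have hecont : Filter.Tendsto (fun u : G => (e u : ℝ)) (𝓝 1) (𝓝 0) := by
    rw [Metric.tendsto_nhds]
    intro ε hε
    obtain ⟨n, hn⟩ : ∃ n : ℕ, ((q : ℝ)) ^ n < ε := by
      refine exists_pow_lt_of_lt_one hε ?_
      rw [hq]; push_cast; norm_num
    filter_upwards [hVn n] with u hu
    rw [Real.dist_eq, sub_zero, abs_of_nonneg (by positivity)]
    calc (e u : ℝ) ≤ (q : ℝ) ^ n := by exact_mod_cast he_le u n hu
      _ < ε := hn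
  have hcont : Continuous fun p : G × G => dd p.1 p.2 := by
    rw [continuous_iff_continuousAt]
    rintro ⟨x₀, y₀⟩
    have hb : ∀ p : G × G, |dd p.1 p.2 - dd x₀ y₀|
        ≤ (e (x₀⁻¹ * p.1) : ℝ) + (e (y₀⁻¹ * p.2) : ℝ) := by
      intro p
      have h1 := @dist_dist_dist_le G I p.1 p.2 x₀ y₀
      rw [Real.dist_eq] at h1
      refine le_trans h1 (add_le_add ?_ ?_)
      · refine le_trans (hub p.1 x₀) ?_
        have : d₀ p.1 x₀ = e (x₀⁻¹ * p.1) := by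
          rw [hd₀]; dsimp only
          rw [← he_symm (p.1⁻¹ * x₀), mul_inv_rev, inv_inv]
        rw [this]
      · refine le_trans (hub p.2 y₀) ?_
        have : d₀ p.2 y₀ = e (y₀⁻¹ * p.2) := by
          rw [hd₀]; dsimp only
          rw [← he_symm (p.2⁻¹ * y₀), mul_inv_rev, inv_inv]
        rw [this]
    have t1 : Filter.Tendsto (fun p : G × G => x₀⁻¹ * p.1) (𝓝 (x₀, y₀)) (𝓝 1) := by
      have hc : Continuous fun p : G × G => x₀⁻¹ * p.1 :=
        continuous_const.mul continuous_fst
      have h := hc.tendsto (x₀, y₀)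
      simpa using h
    have t2 : Filter.Tendsto (fun p : G × G => y₀⁻¹ * p.2) (𝓝 (x₀, y₀)) (𝓝 1) := by
      have hc : Continuous fun p : G × G => y₀⁻¹ * p.2 :=
        continuous_const.mul continuous_snd
      have h := hc.tendsto (x₀, y₀)
      simpa using h
    have htend : Filter.Tendsto
        (fun p : G × G => (e (x₀⁻¹ * p.1) : ℝ) + (e (y₀⁻¹ * p.2) : ℝ))
        (𝓝 (x₀, y₀)) (𝓝 0) := by
      have := (hecont.comp t1).add (hecont.comp t2)
      simpa using this
    have hsub : Filter.Tendsto (fun p : G × G => dd p.1 p.2 - dd x₀ y₀)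
        (𝓝 (x₀, y₀)) (𝓝 0) :=
      squeeze_zero_norm hb htend
    have : Filter.Tendsto (fun p : G × G => dd p.1 p.2) (𝓝 (x₀, y₀)) (𝓝 (dd x₀ y₀)) := by
      have := hsub.add (tendsto_const_nhds (x := dd x₀ y₀))
      simpa using this
    exact this
  -- basic pseudometric properties
  have hdd_self : ∀ x : G, dd x x = 0 := fun x => @dist_self G I x
  have hdd_comm : ∀ x y : G, dd x y = dd y x := fun x y => @dist_comm G I x y
  have hdd_tri : ∀ x y z : G, dd x z ≤ dd x y + dd y z := fun x y z => @dist_triangle G I x y z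
  have hdd_nonneg : ∀ x y : G, 0 ≤ dd x y := fun x y => @dist_nonneg G I x y
  -- package
  refine ⟨fun x y => 2 * dd x y, ⟨?_, ?_, ?_, ?_, ?_, ?_⟩, ?_⟩
  · exact continuous_const.mul hcont
  · intro x; rw [hdd_self]; ring
  · intro x y; rw [hdd_comm]
  · intro x y; have := hdd_nonneg x y; linarith
  · intro x y z; have := hdd_tri x y z; linarith
  · intro a x y; rw [hinvd]
  · have : (d₀ 1 g : ℝ) = 1 := by
      rw [hd₀]; dsimp only
      rw [inv_one, one_mul, he_g]
      norm_num
    rw [this] at hlb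
    exact hlb


/-- Wrapper to avoid instance clashes with the quotient topology. -/
structure PontryaginWrap (α : Type u) : Type u where
  val : α

lemma pontryagin_part2 {G : Type u} [Group G] [TopologicalSpace G]
    [IsTopologicalGroup G] (g : G) (d : G → G → ℝ) (hd : IsContLeftInvPseudometric G d)
    (h1g : 1 ≤ d 1 g) :
      ∃ (X : Type u) (_ : MetricSpace X) (ρ : G → X → X),
        (∀ x : X, ρ 1 x = x) ∧
        (∀ a b : G, ∀ x : X, ρ (a * b) x = ρ a (ρ b x)) ∧
        (∀ a : G, ∀ x y : X, dist (ρ a x) (ρ a y) = dist x y) ∧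
        Continuous (fun p : G × X => ρ p.1 p.2) ∧
        ∃ x : X, ρ g x ≠ x := by
  classical
  letI s : Setoid G :=
    ⟨fun x y => d x y = 0,
      ⟨fun x => hd.self x, fun {x y} h => (hd.symm y x).trans h,
        fun {x y z} hxy hyz => le_antisymm
          (by calc d x z ≤ d x y + d y z := hd.triangle x y z
                _ = 0 := by rw [hxy, hyz, add_zero])
          (hd.nonneg x z)⟩⟩
  have hkey : ∀ a₁ b₁ a₂ b₂ : G, d a₁ a₂ = 0 → d b₁ b₂ = 0 → d a₁ b₁ ≤ d a₂ b₂ := by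
    intro a₁ b₁ a₂ b₂ ha hb
    have h1 : d a₁ b₁ ≤ d a₁ a₂ + d a₂ b₁ := hd.triangle _ _ _
    have h2 : d a₂ b₁ ≤ d a₂ b₂ + d b₂ b₁ := hd.triangle _ _ _
    have hb' : d b₂ b₁ = 0 := (hd.symm b₂ b₁).trans hb
    linarith
  have hwd : ∀ a₁ b₁ a₂ b₂ : G, a₁ ≈ a₂ → b₁ ≈ b₂ → d a₁ b₁ = d a₂ b₂ := by
    intro a₁ b₁ a₂ b₂ ha hb
    have ha' : d a₁ a₂ = 0 := ha
    have hb' : d b₁ b₂ = 0 := hb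
    refine le_antisymm (hkey _ _ _ _ ha' hb') (hkey _ _ _ _ ?_ ?_)
    · exact (hd.symm a₂ a₁).trans ha'
    · exact (hd.symm b₂ b₁).trans hb'
  let X : Type u := PontryaginWrap (Quotient s)
  let mkX : G → X := fun x => ⟨Quotient.mk s x⟩
  have hsurj : ∀ ξ : X, ∃ x : G, mkX x = ξ := by
    rintro ⟨ξ⟩
    obtain ⟨x, hx⟩ := Quotient.exists_rep ξ
    exact ⟨x, by rw [← hx]⟩
  let dX : X → X → ℝ := fun ξ η => Quotient.lift₂ d hwd ξ.val η.val
  have hdXmk : ∀ x y : G, dX (mkX x) (mkX y) = d x y := fun x y => rfl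
  have hXeq : ∀ x y : G, d x y = 0 → mkX x = mkX y := by
    intro x y h
    show (⟨Quotient.mk s x⟩ : X) = ⟨Quotient.mk s y⟩
    congr 1
    exact Quotient.sound h
  have hXexact : ∀ x y : G, mkX x = mkX y → d x y = 0 := by
    intro x y h
    have : Quotient.mk s x = Quotient.mk s y := congrArg PontryaginWrap.val h
    exact Quotient.exact this
  letI instX : MetricSpace X :=
    { dist := dX
      dist_self := fun ξ => by
        obtain ⟨x, rfl⟩ := hsurj ξ
        exact hd.self x
      dist_comm := fun ξ η => by
        obtain ⟨x, rfl⟩ := hsurj ξ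
        obtain ⟨y, rfl⟩ := hsurj η
        exact hd.symm x y
      dist_triangle := fun ξ η ζ => by
        obtain ⟨x, rfl⟩ := hsurj ξ
        obtain ⟨y, rfl⟩ := hsurj η
        obtain ⟨z, rfl⟩ := hsurj ζ
        exact hd.triangle x y z
      eq_of_dist_eq_zero := by
        intro ξ η h
        obtain ⟨x, rfl⟩ := hsurj ξ
        obtain ⟨y, rfl⟩ := hsurj η
        exact hXeq x y h }
  have hdist : ∀ x y : G, dist (mkX x) (mkX y) = d x y := fun x y => rfl
  let ρ : G → X → X := fun a ξ =>
    ⟨Quotient.map (fun x => a * x)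
      (fun x y (h : d x y = 0) => show d (a*x) (a*y) = 0 from (hd.left_inv a x y).trans h) ξ.val⟩
  have hρmk : ∀ (a x : G), ρ a (mkX x) = mkX (a * x) := fun a x => rfl
  refine ⟨X, instX, ρ, ?_, ?_, ?_, ?_, mkX 1, ?_⟩
  · intro ξ
    obtain ⟨x, rfl⟩ := hsurj ξ
    rw [hρmk, one_mul]
  · intro a b ξ
    obtain ⟨x, rfl⟩ := hsurj ξ
    rw [hρmk, hρmk, hρmk, mul_assoc]
  · intro a ξ η
    obtain ⟨x, rfl⟩ := hsurj ξ
    obtain ⟨y, rfl⟩ := hsurj η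
    rw [hρmk, hρmk, hdist, hdist, hd.left_inv]
  · -- continuity
    rw [continuous_iff_continuousAt]
    rintro ⟨a₀, ξ₀⟩
    obtain ⟨x₀, rfl⟩ := hsurj ξ₀
    rw [ContinuousAt, Metric.tendsto_nhds]
    intro ε hε
    have hcf : Continuous fun a : G => d (a * x₀) (a₀ * x₀) := by
      have hc2 : Continuous fun a : G => ((a * x₀, a₀ * x₀) : G × G) := by continuity
      exact hd.continuous.comp hc2
    have hU : {a : G | d (a * x₀) (a₀ * x₀) < ε/2} ∈ 𝓝 a₀ := by
      have hopen : IsOpen {a : G | d (a * x₀) (a₀ * x₀) < ε/2} :=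
        isOpen_lt hcf continuous_const
      refine hopen.mem_nhds ?_
      simp only [Set.mem_setOf_eq, hd.self]
      linarith
    have hB : Metric.ball (mkX x₀) (ε/2) ∈ 𝓝 (mkX x₀) :=
      Metric.ball_mem_nhds _ (by linarith)
    rw [nhds_prod_eq]
    filter_upwards [Filter.prod_mem_prod hU hB]
    rintro ⟨a, ξ⟩ ⟨ha, hξ⟩
    obtain ⟨x, rfl⟩ := hsurj ξ
    simp only [Set.mem_setOf_eq] at ha
    rw [Metric.mem_ball] at hξ
    have htri : dist (ρ a (mkX x)) (ρ a₀ (mkX x₀)) ≤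
        dist (ρ a (mkX x)) (ρ a (mkX x₀)) + dist (ρ a (mkX x₀)) (ρ a₀ (mkX x₀)) :=
      dist_triangle _ _ _
    have h1 : dist (ρ a (mkX x)) (ρ a (mkX x₀)) = dist (mkX x) (mkX x₀) := by
      rw [hρmk, hρmk, hdist, hdist, hd.left_inv]
    have h2 : dist (ρ a (mkX x₀)) (ρ a₀ (mkX x₀)) = d (a * x₀) (a₀ * x₀) := by
      rw [hρmk, hρmk, hdist]
    calc dist (ρ a (mkX x)) (ρ a₀ (mkX x₀)) ≤ _ := htri
      _ < ε/2 + ε/2 := by rw [h1, h2]; exact add_lt_add hξ ha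
      _ = ε := by ring
  · -- nontrivial orbit
    rw [hρmk, mul_one]
    intro h
    have h0 : d g 1 = 0 := hXexact _ _ h
    have h0' : d 1 g = 0 := (hd.symm 1 g).trans h0
    linarith


end PontryaginAux

/-- Pontryagin: if `g` is not in the closure of the identity, there is a continuous
left-invariant pseudometric separating `g` from `1`; in particular `G` acts
continuously and isometrically on a metric space in which `g` has a nontrivial orbit. -/
theorem exists_pseudometric_of_not_mem_closure_one {G : Type u} [Group G] [TopologicalSpace G]
    [IsTopologicalGroup G] (g : G) (hg : g ∉ closure ({1} : Set G)) :
    (∃ d : G → G → ℝ, IsContLeftInvPseudometric G d ∧ 1 ≤ d 1 g) ∧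
      ∃ (X : Type u) (_ : MetricSpace X) (ρ : G → X → X),
        (∀ x : X, ρ 1 x = x) ∧
        (∀ a b : G, ∀ x : X, ρ (a * b) x = ρ a (ρ b x)) ∧
        (∀ a : G, ∀ x y : X, dist (ρ a x) (ρ a y) = dist x y) ∧
        Continuous (fun p : G × X => ρ p.1 p.2) ∧
        ∃ x : X, ρ g x ≠ x := by
  obtain ⟨d, hd, h1g⟩ := exists_sep_pseudometric g hg
  exact ⟨⟨d, hd, h1g⟩, pontryagin_part2 g d hd h1g⟩
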